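/- In SSynch with non-rigid movements, two finite-communication robots running the 3-color algorithm below solve Rendezvous from every pair of initial positions in ℝ², every pair of initial light colors in {A,B,C}, every pair of unit distances, every δ > 0, every fair schedule, and every adversarial choice of stopping points. In particular, Rendezvous of two finite-communication robots in SSynch is solvable by an algorithm of class 𝓛 with only three colors, even starting from an arbitrary color configuration, without unit distance agreement, and with non-rigid movements. -/
import Mathlib


/-- Points in the plane. -/
abbrev Pt := EuclideanSpace ℝ (Fin 2)

/-- The three light colors. -/
inductive ColABC | A | B | C
deriving DecidableEq

/-- A configuration of two finite-communication robots: positions and light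
colors (robot `r` is `false`, robot `s` is `true`); each robot sees only the
other robot's light. -/
structure ConfigFC where
  pos : Bool → Pt
  col : Bool → ColABC

/-- The 3-color algorithm (class 𝓛): on seeing the other robot's color `c`
from own position `p`, the other robot being at `q`, set own light and compute
the destination: `A ↦ (B, midpoint)`, `B ↦ (C, stay)`, `C ↦ (A, q)`. -/
noncomputable def algo15 (p q : Pt) (c : ColABC) : ColABC × Pt :=
  match c with
  | .A => (.B, p + (1/2 : ℝ) • (q - p))
  | .B => (.C, p)
  | .C => (.A, q)

/-- One SSynch round with non-rigid movements with parameter `δ`: each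
activated robot `i` (those with `act i = true`) simultaneously observes the
other robot's position and light, sets its own light, and moves along the
straight segment toward its computed destination, stopping at an
adversarially chosen point that either is the destination or lies at distance
at least `δ` from its starting point; non-activated robots do nothing. -/
def StepFC (δ : ℝ) (act : Bool → Bool) (c c' : ConfigFC) : Prop :=
  ∀ i : Bool,
    (act i = true →
      c'.col i = (algo15 (c.pos i) (c.pos (!i)) (c.col (!i))).1 ∧
      c'.pos i ∈ segment ℝ (c.pos i) (algo15 (c.pos i) (c.pos (!i)) (c.col (!i))).2 ∧
      (c'.pos i = (algo15 (c.pos i) (c.pos (!i)) (c.col (!i))).2 ∨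
        δ ≤ ‖c'.pos i - c.pos i‖)) ∧
    (act i = false → c'.pos i = c.pos i ∧ c'.col i = c.col i)

/-- A legal fair SSynch schedule: at every round a nonempty set of robots is
activated, and each robot is activated infinitely often. -/
def FairSched (sched : ℕ → Bool → Bool) : Prop :=
  (∀ n, sched n false = true ∨ sched n true = true) ∧
  (∀ i n, ∃ m, n ≤ m ∧ sched m i = true)

/-- Rendezvous is solved: from some round on, the two robots occupy the same
point and never move again. -/
def SolvesFC (exec : ℕ → ConfigFC) : Prop :=
  ∃ N : ℕ, ∀ n, N ≤ n → ∀ i, (exec n).pos i = (exec N).pos false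

namespace RVaux

/-- movement fraction associated to an observed color -/
noncomputable def mu : ColABC → ℝ
  | .A => 1/2 | .B => 0 | .C => 1

/-- next color -/
def nxt : ColABC → ColABC
  | .A => .B | .B => .C | .C => .A

lemma mu_nonneg (c : ColABC) : 0 ≤ mu c := by cases c <;> norm_num [mu]
lemma mu_le_one (c : ColABC) : mu c ≤ 1 := by cases c <;> norm_num [mu]
lemma mu_ge_half (c : ColABC) (h : c ≠ ColABC.B) : 1/2 ≤ mu c := by
  cases c
  · norm_num [mu]
  · exact absurd rfl h
  · norm_num [mu]
lemma mu_le_half (c : ColABC) (h : c ≠ ColABC.C) : mu c ≤ 1/2 := by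
  cases c
  · norm_num [mu]
  · norm_num [mu]
  · exact absurd rfl h

lemma algo_fst (p q : Pt) (c : ColABC) : (algo15 p q c).1 = nxt c := by cases c <;> rfl
lemma algo_snd (p q : Pt) (c : ColABC) : (algo15 p q c).2 = p + mu c • (q - p) := by
  cases c <;> simp [algo15, mu]

/-- distance between the two robots -/
noncomputable abbrev DD (exec : ℕ → ConfigFC) (n : ℕ) : ℝ :=
  ‖(exec n).pos false - (exec n).pos true‖

section Exec

variable {δ : ℝ} {exec : ℕ → ConfigFC} {sched : ℕ → Bool → Bool}

lemma decomp (hstep : ∀ n, StepFC δ (sched n) (exec n) (exec (n + 1))) (n : ℕ) (i : Bool) :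
    ∃ a : ℝ, 0 ≤ a ∧ a ≤ mu ((exec n).col (!i)) ∧
      (exec (n+1)).pos i = (exec n).pos i + a • ((exec n).pos (!i) - (exec n).pos i) ∧
      (sched n i = false → a = 0) ∧
      (sched n i = true → a = mu ((exec n).col (!i)) ∨
        δ ≤ a * ‖(exec n).pos (!i) - (exec n).pos i‖ ∨
        (exec n).pos (!i) = (exec n).pos i) := by
  cases hai : sched n i with
  | false =>
      refine ⟨0, le_rfl, mu_nonneg _, ?_, fun _ => rfl, fun h => by simp at h⟩
      rw [((hstep n i).2 hai).1]; simp
  | true =>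
      obtain ⟨-, hseg, hmv⟩ := (hstep n i).1 hai
      rw [algo_snd] at hseg hmv
      rw [segment_eq_image'] at hseg
      obtain ⟨t, ht, hpos⟩ := hseg
      have hq : (exec n).pos i + mu ((exec n).col (!i)) • ((exec n).pos (!i) - (exec n).pos i)
          - (exec n).pos i = mu ((exec n).col (!i)) • ((exec n).pos (!i) - (exec n).pos i) := by
        abel
      rw [hq] at hpos
      simp only [smul_smul] at hpos
      refine ⟨t * mu ((exec n).col (!i)), mul_nonneg ht.1 (mu_nonneg _), ?_, hpos.symm,
        fun h => by simp at h, fun _ => ?_⟩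
      · calc t * mu ((exec n).col (!i)) ≤ 1 * mu ((exec n).col (!i)) :=
              mul_le_mul_of_nonneg_right ht.2 (mu_nonneg _)
          _ = _ := one_mul _
      · rcases hmv with h | h
        · have h2 : (t * mu ((exec n).col (!i)) - mu ((exec n).col (!i))) •
              ((exec n).pos (!i) - (exec n).pos i) = 0 := by
            have h3 := hpos.trans h
            rw [sub_smul]
            have := add_left_cancel h3
            rw [this]; abel
          rcases smul_eq_zero.mp h2 with h4 | h4
          · exact Or.inl (by linarith [sub_eq_zero.mp h4])
          · exact Or.inr (Or.inr (sub_eq_zero.mp h4))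
        · rw [← hpos] at h
          right; left
          have : (exec n).pos i + (t * mu ((exec n).col (!i))) •
              ((exec n).pos (!i) - (exec n).pos i) - (exec n).pos i
              = (t * mu ((exec n).col (!i))) • ((exec n).pos (!i) - (exec n).pos i) := by abel
          rw [this, norm_smul, Real.norm_eq_abs,
            abs_of_nonneg (mul_nonneg ht.1 (mu_nonneg _))] at h
          exact h

lemma sub_eq (p q : Pt) (a b : ℝ) :
    (p + a • (q - p)) - (q + b • (p - q)) = (1 - a - b) • (p - q) := by
  module

lemma D_eq (hstep : ∀ n, StepFC δ (sched n) (exec n) (exec (n + 1))) (n : ℕ) :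
    ∃ a b : ℝ, 0 ≤ a ∧ a ≤ mu ((exec n).col true) ∧ 0 ≤ b ∧ b ≤ mu ((exec n).col false) ∧
      DD exec (n+1) = |1 - a - b| * DD exec n ∧
      (sched n false = false → a = 0) ∧ (sched n true = false → b = 0) ∧
      (sched n false = true → a = mu ((exec n).col true) ∨ δ ≤ a * DD exec n ∨
        (exec n).pos false = (exec n).pos true) ∧
      (sched n true = true → b = mu ((exec n).col false) ∨ δ ≤ b * DD exec n ∨
        (exec n).pos false = (exec n).pos true) := by
  obtain ⟨a, ha0, ha1, hpa, hfa, hta⟩ := decomp hstep n false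
  obtain ⟨b, hb0, hb1, hpb, hfb, htb⟩ := decomp hstep n true
  simp only [Bool.not_false, Bool.not_true] at ha1 hb1 hpa hpb hta htb
  refine ⟨a, b, ha0, ha1, hb0, hb1, ?_, hfa, hfb, ?_, ?_⟩
  · rw [DD, hpa, hpb, sub_eq, norm_smul, Real.norm_eq_abs]
  · intro h
    rcases hta h with h1 | h1 | h1
    · exact Or.inl h1
    · rw [norm_sub_rev] at h1; exact Or.inr (Or.inl h1)
    · exact Or.inr (Or.inr h1.symm)
  · intro h
    rcases htb h with h1 | h1 | h1
    · exact Or.inl h1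
    · exact Or.inr (Or.inl h1)
    · exact Or.inr (Or.inr h1)

lemma D_mono (hstep : ∀ n, StepFC δ (sched n) (exec n) (exec (n + 1))) (n : ℕ) :
    DD exec (n+1) ≤ DD exec n := by
  obtain ⟨a, b, ha0, ha1, hb0, hb1, hD, -⟩ := D_eq hstep n
  have ha1' : a ≤ 1 := ha1.trans (mu_le_one _)
  have hb1' : b ≤ 1 := hb1.trans (mu_le_one _)
  have habs : |1 - a - b| ≤ 1 := abs_le.2 ⟨by linarith, by linarith⟩
  rw [hD]
  calc |1 - a - b| * DD exec n ≤ 1 * DD exec n :=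
        mul_le_mul_of_nonneg_right habs (norm_nonneg _)
    _ = _ := one_mul _

lemma D_mono_le (hstep : ∀ n, StepFC δ (sched n) (exec n) (exec (n + 1))) :
    ∀ {m k : ℕ}, m ≤ k → DD exec k ≤ DD exec m := by
  intro m k h
  induction k with
  | zero => simp_all
  | succ k ih =>
      rcases Nat.lt_or_ge m (k+1) with h2 | h2
      · exact (D_mono hstep k).trans (ih (Nat.lt_succ_iff.mp h2))
      · have : m = k + 1 := le_antisymm h h2
        simp [this]

lemma col_act (hstep : ∀ n, StepFC δ (sched n) (exec n) (exec (n + 1))) (n : ℕ) (i : Bool)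
    (hi : sched n i = true) : (exec (n+1)).col i = nxt ((exec n).col (!i)) := by
  have h := ((hstep n i).1 hi).1
  rwa [algo_fst] at h

lemma col_inact (hstep : ∀ n, StepFC δ (sched n) (exec n) (exec (n + 1))) (n : ℕ) (i : Bool)
    (hi : sched n i = false) : (exec (n+1)).col i = (exec n).col i := ((hstep n i).2 hi).2

lemma notmove (hstep : ∀ n, StepFC δ (sched n) (exec n) (exec (n + 1))) (n : ℕ) (i : Bool)
    (h : sched n i = false ∨ (exec n).col (!i) = ColABC.B) :
    (exec (n+1)).pos i = (exec n).pos i := by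
  obtain ⟨a, ha0, ha1, hpa, hfa, -⟩ := decomp hstep n i
  rcases h with h | h
  · rw [hpa, hfa h]; simp
  · have ha : a = 0 := le_antisymm (by simpa [h, mu] using ha1) ha0
    rw [hpa, ha]; simp

lemma rigid (hstep : ∀ n, StepFC δ (sched n) (exec n) (exec (n + 1))) (n : ℕ) (i : Bool)
    (hi : sched n i = true) (hD : DD exec n < δ) :
    (exec (n+1)).pos i = (exec n).pos i +
      mu ((exec n).col (!i)) • ((exec n).pos (!i) - (exec n).pos i) := by
  obtain ⟨a, ha0, ha1, hpa, -, hta⟩ := decomp hstep n i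
  rcases hta hi with h | h | h
  · rw [hpa, h]
  · exfalso
    have hn : ‖(exec n).pos (!i) - (exec n).pos i‖ = DD exec n := by
      cases i
      · simp [DD, norm_sub_rev]
      · simp [DD]
    rw [hn] at h
    have hDnn : (0:ℝ) ≤ DD exec n := norm_nonneg _
    have ha1' : a ≤ 1 := ha1.trans (mu_le_one _)
    nlinarith
  · rw [hpa, h]; simp

lemma meet_forever (hstep : ∀ n, StepFC δ (sched n) (exec n) (exec (n + 1))) (n : ℕ)
    (h : (exec n).pos false = (exec n).pos true) :
    ∀ m, n ≤ m → ((exec m).pos false = (exec n).pos false ∧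
      (exec m).pos true = (exec n).pos false) := by
  intro m hm
  induction m with
  | zero =>
      have : n = 0 := Nat.le_zero.mp hm
      subst this; exact ⟨rfl, h.symm⟩
  | succ m ih =>
      rcases Nat.lt_or_ge n (m+1) with h2 | h2
      · have hm' := Nat.lt_succ_iff.mp h2
        obtain ⟨h1, h2'⟩ := ih hm'
        have hme : (exec m).pos false = (exec m).pos true := h1.trans h2'.symm
        have key : ∀ i, (exec (m+1)).pos i = (exec m).pos i := by
          intro i
          obtain ⟨a, -, -, hpa, -, -⟩ := decomp hstep m i
          have hz : (exec m).pos (!i) - (exec m).pos i = 0 := by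
            cases i
            · simp [hme.symm]
            · simp [hme]
          rw [hpa, hz]; simp
        exact ⟨(key false).trans h1, (key true).trans h2'⟩
      · have : n = m + 1 := le_antisymm hm h2
        subst this; exact ⟨rfl, h.symm⟩

lemma exists_first (hfair : FairSched sched) (i : Bool) (Inv : ℕ → Prop) :
    ∀ n, Inv n → (∀ m, n ≤ m → sched m i = false → Inv m → Inv (m+1)) →
      ∃ m, n ≤ m ∧ sched m i = true ∧ Inv m := by
  have key : ∀ k n, sched (n + k) i = true → Inv n →
      (∀ m, n ≤ m → sched m i = false → Inv m → Inv (m+1)) →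
      ∃ m, n ≤ m ∧ sched m i = true ∧ Inv m := by
    intro k
    induction k with
    | zero => exact fun n hs h0 _ => ⟨n, le_rfl, hs, h0⟩
    | succ k ih =>
        intro n hs h0 hpres
        cases hsn : sched n i with
        | true => exact ⟨n, le_rfl, hsn, h0⟩
        | false =>
            have h1 : Inv (n+1) := hpres n le_rfl hsn h0
            have hs' : sched (n+1+k) i = true := by
              rwa [show n+1+k = n+(k+1) by ring]
            obtain ⟨m, hm, h2, h3⟩ := ih (n+1) hs' h1 (fun m hm => hpres m (by omega))
            exact ⟨m, by omega, h2, h3⟩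
  intro n h0 hpres
  obtain ⟨m, hm, hsm⟩ := hfair.2 i n
  exact key (m - n) n (by rwa [Nat.add_sub_cancel' hm]) h0 hpres

lemma realProg {a b d δ : ℝ} (hδ : 0 < δ) (hd : δ ≤ d) (ha0 : 0 ≤ a) (ha1 : a ≤ 1)
    (hb0 : 0 ≤ b) (hb1 : b ≤ 1) (hmv : δ/2 ≤ a*d ∨ δ/2 ≤ b*d) (hh : a ≤ 1/2 ∨ b ≤ 1/2) :
    |1 - a - b| * d ≤ d - δ/2 := by
  have hd0 : (0:ℝ) ≤ d := hδ.le.trans hd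
  rcases abs_cases (1 - a - b) with ⟨he, -⟩ | ⟨he, -⟩ <;> rw [he] <;>
    rcases hmv with h | h <;> rcases hh with h2 | h2 <;>
    nlinarith [mul_nonneg ha0 hd0, mul_nonneg hb0 hd0,
      mul_le_mul_of_nonneg_right ha1 hd0, mul_le_mul_of_nonneg_right hb1 hd0,
      mul_le_mul_of_nonneg_right h2 hd0]

lemma potent_step (hstep : ∀ n, StepFC δ (sched n) (exec n) (exec (n + 1)))
    (hδ : 0 < δ) (n : ℕ)
    (hne : (exec n).pos false ≠ (exec n).pos true) (hd : δ ≤ DD exec n)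
    (i : Bool) (hi : sched n i = true) (hci : (exec n).col (!i) ≠ ColABC.B)
    (hnotCC : ¬((exec n).col false = ColABC.C ∧ (exec n).col true = ColABC.C ∧
      sched n false = true ∧ sched n true = true)) :
    DD exec (n+1) ≤ DD exec n - δ/2 := by
  obtain ⟨a, b, ha0, ha1, hb0, hb1, hD, hfa, hfb, hta, htb⟩ := D_eq hstep n
  have hd0 : (0:ℝ) ≤ DD exec n := norm_nonneg _
  have hmv : δ/2 ≤ a * DD exec n ∨ δ/2 ≤ b * DD exec n := by
    cases i with
    | false =>
        left
        rcases hta hi with h | h | h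
        · have hμ : 1/2 ≤ mu ((exec n).col true) := mu_ge_half _ (by simpa using hci)
          rw [h]; nlinarith
        · linarith
        · exact absurd h hne
    | true =>
        right
        rcases htb hi with h | h | h
        · have hμ : 1/2 ≤ mu ((exec n).col false) := mu_ge_half _ (by simpa using hci)
          rw [h]; nlinarith
        · linarith
        · exact absurd h hne
  have hh : a ≤ 1/2 ∨ b ≤ 1/2 := by
    by_cases hT : (exec n).col true = ColABC.C
    · by_cases hF : (exec n).col false = ColABC.C
      · -- both C: not both scheduled
        by_cases hsf : sched n false = true
        · have hst : sched n true = false := by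
            cases hst : sched n true
            · rfl
            · exact absurd ⟨hF, hT, hsf, hst⟩ hnotCC
          right; rw [hfb hst]; norm_num
        · left
          rw [hfa (Bool.not_eq_true _ |>.mp hsf)]; norm_num
      · right; exact hb1.trans (mu_le_half _ hF)
    · left; exact ha1.trans (mu_le_half _ hT)
  rw [hD]
  exact realProg hδ hd ha0 (ha1.trans (mu_le_one _)) hb0 (hb1.trans (mu_le_one _)) hmv hh

lemma find_good (hstep : ∀ n, StepFC δ (sched n) (exec n) (exec (n + 1)))
    (hfair : FairSched sched) (hδ : 0 < δ)
    (Hd : ∀ m, δ ≤ DD exec m) (Hne : ∀ m, (exec m).pos false ≠ (exec m).pos true) (n : ℕ) :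
    ∃ m, n ≤ m ∧ DD exec (m+1) ≤ DD exec m - δ/2 := by
  -- helper: from a CC-both round, progress one round later
  have fromCC : ∀ m, (exec m).col false = ColABC.C → (exec m).col true = ColABC.C →
      sched m false = true → sched m true = true →
      DD exec (m+2) ≤ DD exec (m+1) - δ/2 := by
    intro m hF hT hsf hst
    have hA1 : (exec (m+1)).col false = ColABC.A := by
      rw [col_act hstep m false hsf]; simp [hT, nxt]
    have hA2 : (exec (m+1)).col true = ColABC.A := by
      rw [col_act hstep m true hst]; simp [hF, nxt]
    have hnotCC : ¬((exec (m+1)).col false = ColABC.C ∧ (exec (m+1)).col true = ColABC.C ∧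
        sched (m+1) false = true ∧ sched (m+1) true = true) := by
      rintro ⟨h1, -⟩; rw [hA1] at h1; exact ColABC.noConfusion h1
    rcases hfair.1 (m+1) with hs | hs
    · exact potent_step hstep hδ (m+1) (Hne _) (Hd _) false hs
        (by simp [hA2]) hnotCC
    · exact potent_step hstep hδ (m+1) (Hne _) (Hd _) true hs
        (by simp [hA1]) hnotCC
  have fromNotBB : ∀ m, ¬((exec m).col false = ColABC.B ∧ (exec m).col true = ColABC.B) →
      ∃ m', m ≤ m' ∧ DD exec (m'+1) ≤ DD exec m' - δ/2 := by
    intro m hBB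
    by_cases hCC : (exec m).col false = ColABC.C ∧ (exec m).col true = ColABC.C
    · by_cases hboth : sched m false = true ∧ sched m true = true
      · exact ⟨m+1, by omega, fromCC m hCC.1 hCC.2 hboth.1 hboth.2⟩
      · have hnotCC : ¬((exec m).col false = ColABC.C ∧ (exec m).col true = ColABC.C ∧
            sched m false = true ∧ sched m true = true) := by
          rintro ⟨-, -, h1, h2⟩; exact hboth ⟨h1, h2⟩
        rcases hfair.1 m with hs | hs
        · exact ⟨m, le_rfl, potent_step hstep hδ m (Hne _) (Hd _) false hs
            (by simp [hCC.2]) hnotCC⟩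
        · exact ⟨m, le_rfl, potent_step hstep hδ m (Hne _) (Hd _) true hs
            (by simp [hCC.1]) hnotCC⟩
    · by_cases hFB : (exec m).col false = ColABC.B
      ·
        have hTB : (exec m).col true ≠ ColABC.B := fun h => hBB ⟨hFB, h⟩
        have hpres : ∀ k, m ≤ k → sched k false = false →
            ((exec k).col false = ColABC.B ∧ (exec k).col true ≠ ColABC.B) →
            ((exec (k+1)).col false = ColABC.B ∧ (exec (k+1)).col true ≠ ColABC.B) := by
          rintro k hk hsk ⟨h1, h2⟩
          refine ⟨(col_inact hstep k false hsk).trans h1, ?_⟩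
          cases hst : sched k true
          · rw [col_inact hstep k true hst]; exact h2
          · rw [col_act hstep k true hst]
            simp only [Bool.not_true, h1]
            intro hcon; exact ColABC.noConfusion hcon
        obtain ⟨m', hm', hs', hInv⟩ := exists_first hfair false
          (fun k => (exec k).col false = ColABC.B ∧ (exec k).col true ≠ ColABC.B) m
          ⟨hFB, hTB⟩ hpres
        refine ⟨m', hm', potent_step hstep hδ m' (Hne _) (Hd _) false hs'
          (by simpa using hInv.2) ?_⟩
        rintro ⟨h1, -⟩; rw [hInv.1] at h1; exact ColABC.noConfusion h1
      · by_cases hTB : (exec m).col true = ColABC.B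
        · have hFB' : (exec m).col false ≠ ColABC.B := hFB
          have hpres : ∀ k, m ≤ k → sched k true = false →
              ((exec k).col true = ColABC.B ∧ (exec k).col false ≠ ColABC.B) →
              ((exec (k+1)).col true = ColABC.B ∧ (exec (k+1)).col false ≠ ColABC.B) := by
            rintro k hk hsk ⟨h1, h2⟩
            refine ⟨(col_inact hstep k true hsk).trans h1, ?_⟩
            cases hsf : sched k false
            · rw [col_inact hstep k false hsf]; exact h2
            · rw [col_act hstep k false hsf]
              simp only [Bool.not_false, h1]
              intro hcon; exact ColABC.noConfusion hcon
          obtain ⟨m', hm', hs', hInv⟩ := exists_first hfair true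
            (fun k => (exec k).col true = ColABC.B ∧ (exec k).col false ≠ ColABC.B) m
            ⟨hTB, hFB'⟩ hpres
          refine ⟨m', hm', potent_step hstep hδ m' (Hne _) (Hd _) true hs'
            (by simpa using hInv.2) ?_⟩
          rintro ⟨-, h1, -⟩; rw [hInv.1] at h1; exact ColABC.noConfusion h1
        · -- neither has B
          have hnotCC : ¬((exec m).col false = ColABC.C ∧ (exec m).col true = ColABC.C ∧
              sched m false = true ∧ sched m true = true) := by
            rintro ⟨h1, h2, -⟩; exact hCC ⟨h1, h2⟩
          rcases hfair.1 m with hs | hs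
          · exact ⟨m, le_rfl, potent_step hstep hδ m (Hne _) (Hd _) false hs
              (by simpa using hTB) hnotCC⟩
          · exact ⟨m, le_rfl, potent_step hstep hδ m (Hne _) (Hd _) true hs
              (by simpa using hFB) hnotCC⟩
  by_cases hBB : (exec n).col false = ColABC.B ∧ (exec n).col true = ColABC.B
  · have h1 : ¬((exec (n+1)).col false = ColABC.B ∧ (exec (n+1)).col true = ColABC.B) := by
      rcases hfair.1 n with hs | hs
      · rintro ⟨h2, -⟩
        rw [col_act hstep n false hs] at h2
        simp only [Bool.not_false, hBB.2, nxt] at h2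
        exact ColABC.noConfusion h2
      · rintro ⟨-, h2⟩
        rw [col_act hstep n true hs] at h2
        simp only [Bool.not_true, hBB.1, nxt] at h2
        exact ColABC.noConfusion h2
    obtain ⟨m', hm', hp⟩ := fromNotBB (n+1) h1
    exact ⟨m', by omega, hp⟩
  · exact fromNotBB n hBB

lemma no_far (hstep : ∀ n, StepFC δ (sched n) (exec n) (exec (n + 1)))
    (hfair : FairSched sched) (hδ : 0 < δ)
    (Hne : ∀ m, (exec m).pos false ≠ (exec m).pos true) :
    ¬(∀ m, δ ≤ DD exec m) := by
  intro Hd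
  have key : ∀ j : ℕ, ∃ m, DD exec m ≤ DD exec 0 - j * (δ/2) := by
    intro j
    induction j with
    | zero => exact ⟨0, by simp⟩
    | succ j ih =>
        obtain ⟨m, hm⟩ := ih
        obtain ⟨m', hm'le, hp⟩ := find_good hstep hfair hδ Hd Hne m
        refine ⟨m'+1, ?_⟩
        have h2 : DD exec m' ≤ DD exec m := D_mono_le hstep hm'le
        push_cast
        linarith
  obtain ⟨j, hj⟩ := exists_nat_gt (DD exec 0 / (δ/2))
  obtain ⟨m, hm⟩ := key j
  have h2 : DD exec 0 < j * (δ/2) := by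
    rwa [div_lt_iff₀ (by linarith)] at hj
  have := Hd m
  linarith

lemma full_move (hstep : ∀ n, StepFC δ (sched n) (exec n) (exec (n + 1))) (n : ℕ) (i : Bool)
    (hi : sched n i = true) (hc : (exec n).col (!i) = ColABC.C) (hD : DD exec n < δ) :
    (exec (n+1)).pos i = (exec n).pos (!i) := by
  rw [rigid hstep n i hi hD, hc]
  simp [mu]

lemma half_move (hstep : ∀ n, StepFC δ (sched n) (exec n) (exec (n + 1))) (n : ℕ) (i : Bool)
    (hi : sched n i = true) (hc : (exec n).col (!i) = ColABC.A) (hD : DD exec n < δ) :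
    (exec (n+1)).pos i = (exec n).pos i + (1/2 : ℝ) • ((exec n).pos (!i) - (exec n).pos i) := by
  rw [rigid hstep n i hi hD, hc]
  norm_num [mu]

/-- goal of phase 2 -/
def Meets (exec : ℕ → ConfigFC) : Prop := ∃ m, (exec m).pos false = (exec m).pos true

lemma L_CB (hstep : ∀ n, StepFC δ (sched n) (exec n) (exec (n + 1)))
    (hfair : FairSched sched) (n : ℕ) (hsmall : ∀ m, n ≤ m → DD exec m < δ)
    (h1 : (exec n).col false = ColABC.C) (h2 : (exec n).col true = ColABC.B) :
    Meets exec := by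
  have hpres : ∀ k, n ≤ k → sched k true = false →
      ((exec k).col false = ColABC.C ∧ (exec k).col true = ColABC.B) →
      ((exec (k+1)).col false = ColABC.C ∧ (exec (k+1)).col true = ColABC.B) := by
    rintro k hk hsk ⟨hc1, hc2⟩
    refine ⟨?_, (col_inact hstep k true hsk).trans hc2⟩
    cases hsf : sched k false
    · exact (col_inact hstep k false hsf).trans hc1
    · rw [col_act hstep k false hsf]; simp [hc2, nxt]
  obtain ⟨m, hm, hs, hI1, hI2⟩ := exists_first hfair true
    (fun k => (exec k).col false = ColABC.C ∧ (exec k).col true = ColABC.B) n ⟨h1, h2⟩ hpres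
  refine ⟨m+1, ?_⟩
  have hmv : (exec (m+1)).pos true = (exec m).pos false :=
    full_move hstep m true hs (by simpa using hI1) (hsmall m hm)
  have hst : (exec (m+1)).pos false = (exec m).pos false := by
    refine notmove hstep m false ?_
    cases hsf : sched m false
    · exact Or.inl rfl
    · exact Or.inr (by simpa using hI2)
  rw [hst, hmv]

lemma L_BC (hstep : ∀ n, StepFC δ (sched n) (exec n) (exec (n + 1)))
    (hfair : FairSched sched) (n : ℕ) (hsmall : ∀ m, n ≤ m → DD exec m < δ)
    (h1 : (exec n).col false = ColABC.B) (h2 : (exec n).col true = ColABC.C) :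
    Meets exec := by
  have hpres : ∀ k, n ≤ k → sched k false = false →
      ((exec k).col false = ColABC.B ∧ (exec k).col true = ColABC.C) →
      ((exec (k+1)).col false = ColABC.B ∧ (exec (k+1)).col true = ColABC.C) := by
    rintro k hk hsk ⟨hc1, hc2⟩
    refine ⟨(col_inact hstep k false hsk).trans hc1, ?_⟩
    cases hst : sched k true
    · exact (col_inact hstep k true hst).trans hc2
    · rw [col_act hstep k true hst]; simp [hc1, nxt]
  obtain ⟨m, hm, hs, hI1, hI2⟩ := exists_first hfair false
    (fun k => (exec k).col false = ColABC.B ∧ (exec k).col true = ColABC.C) n ⟨h1, h2⟩ hpres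
  refine ⟨m+1, ?_⟩
  have hmv : (exec (m+1)).pos false = (exec m).pos true :=
    full_move hstep m false hs (by simpa using hI2) (hsmall m hm)
  have hst : (exec (m+1)).pos true = (exec m).pos true := by
    refine notmove hstep m true ?_
    cases hst : sched m true
    · exact Or.inl rfl
    · exact Or.inr (by simpa using hI1)
  rw [hst, hmv]

lemma L_AB (hstep : ∀ n, StepFC δ (sched n) (exec n) (exec (n + 1)))
    (hfair : FairSched sched) (n : ℕ) (hsmall : ∀ m, n ≤ m → DD exec m < δ)
    (h1 : (exec n).col false = ColABC.A) (h2 : (exec n).col true = ColABC.B) :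
    Meets exec := by
  have hpres : ∀ k, n ≤ k → sched k false = false →
      ((exec k).col false = ColABC.A ∧ (exec k).col true = ColABC.B) →
      ((exec (k+1)).col false = ColABC.A ∧ (exec (k+1)).col true = ColABC.B) := by
    rintro k hk hsk ⟨hc1, hc2⟩
    refine ⟨(col_inact hstep k false hsk).trans hc1, ?_⟩
    cases hst : sched k true
    · exact (col_inact hstep k true hst).trans hc2
    · rw [col_act hstep k true hst]; simp [hc1, nxt]
  obtain ⟨m, hm, hs, hI1, hI2⟩ := exists_first hfair false
    (fun k => (exec k).col false = ColABC.A ∧ (exec k).col true = ColABC.B) n ⟨h1, h2⟩ hpres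
  refine L_CB hstep hfair (m+1) (fun k hk => hsmall k (by omega)) ?_ ?_
  · rw [col_act hstep m false hs]; simp [hI2, nxt]
  · cases hst : sched m true
    · exact (col_inact hstep m true hst).trans hI2
    · rw [col_act hstep m true hst]; simp [hI1, nxt]

lemma L_BA (hstep : ∀ n, StepFC δ (sched n) (exec n) (exec (n + 1)))
    (hfair : FairSched sched) (n : ℕ) (hsmall : ∀ m, n ≤ m → DD exec m < δ)
    (h1 : (exec n).col false = ColABC.B) (h2 : (exec n).col true = ColABC.A) :
    Meets exec := by
  have hpres : ∀ k, n ≤ k → sched k true = false →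
      ((exec k).col false = ColABC.B ∧ (exec k).col true = ColABC.A) →
      ((exec (k+1)).col false = ColABC.B ∧ (exec (k+1)).col true = ColABC.A) := by
    rintro k hk hsk ⟨hc1, hc2⟩
    refine ⟨?_, (col_inact hstep k true hsk).trans hc2⟩
    cases hsf : sched k false
    · exact (col_inact hstep k false hsf).trans hc1
    · rw [col_act hstep k false hsf]; simp [hc2, nxt]
  obtain ⟨m, hm, hs, hI1, hI2⟩ := exists_first hfair true
    (fun k => (exec k).col false = ColABC.B ∧ (exec k).col true = ColABC.A) n ⟨h1, h2⟩ hpres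
  refine L_BC hstep hfair (m+1) (fun k hk => hsmall k (by omega)) ?_ ?_
  · cases hsf : sched m false
    · exact (col_inact hstep m false hsf).trans hI1
    · rw [col_act hstep m false hsf]; simp [hI2, nxt]
  · rw [col_act hstep m true hs]; simp [hI1, nxt]

lemma L_CA (hstep : ∀ n, StepFC δ (sched n) (exec n) (exec (n + 1)))
    (hfair : FairSched sched) (n : ℕ) (hsmall : ∀ m, n ≤ m → DD exec m < δ)
    (h1 : (exec n).col false = ColABC.C) (h2 : (exec n).col true = ColABC.A) :
    Meets exec := by
  cases hsf : sched n false
  · -- r inactive, so s is active: s moves onto r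
    have hst : sched n true = true := by
      rcases hfair.1 n with h | h
      · rw [hsf] at h; exact absurd h (by simp)
      · exact h
    refine ⟨n+1, ?_⟩
    have hmv : (exec (n+1)).pos true = (exec n).pos false :=
      full_move hstep n true hst (by simpa using h1) (hsmall n le_rfl)
    have hstay : (exec (n+1)).pos false = (exec n).pos false :=
      notmove hstep n false (Or.inl hsf)
    rw [hstay, hmv]
  · -- r active: colors become (B, A)
    refine L_BA hstep hfair (n+1) (fun k hk => hsmall k (by omega)) ?_ ?_
    · rw [col_act hstep n false hsf]; simp [h2, nxt]
    · cases hst : sched n true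
      · exact (col_inact hstep n true hst).trans h2
      · rw [col_act hstep n true hst]; simp [h1, nxt]

lemma L_AC (hstep : ∀ n, StepFC δ (sched n) (exec n) (exec (n + 1)))
    (hfair : FairSched sched) (n : ℕ) (hsmall : ∀ m, n ≤ m → DD exec m < δ)
    (h1 : (exec n).col false = ColABC.A) (h2 : (exec n).col true = ColABC.C) :
    Meets exec := by
  cases hst : sched n true
  · have hsf : sched n false = true := by
      rcases hfair.1 n with h | h
      · exact h
      · rw [hst] at h; exact absurd h (by simp)
    refine ⟨n+1, ?_⟩
    have hmv : (exec (n+1)).pos false = (exec n).pos true :=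
      full_move hstep n false hsf (by simpa using h2) (hsmall n le_rfl)
    have hstay : (exec (n+1)).pos true = (exec n).pos true :=
      notmove hstep n true (Or.inl hst)
    rw [hstay, hmv]
  · refine L_AB hstep hfair (n+1) (fun k hk => hsmall k (by omega)) ?_ ?_
    · cases hsf : sched n false
      · exact (col_inact hstep n false hsf).trans h1
      · rw [col_act hstep n false hsf]; simp [h2, nxt]
    · rw [col_act hstep n true hst]; simp [h1, nxt]

lemma L_AA (hstep : ∀ n, StepFC δ (sched n) (exec n) (exec (n + 1)))
    (hfair : FairSched sched) (n : ℕ) (hsmall : ∀ m, n ≤ m → DD exec m < δ)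
    (h1 : (exec n).col false = ColABC.A) (h2 : (exec n).col true = ColABC.A) :
    Meets exec := by
  cases hsf : sched n false <;> cases hst : sched n true
  · rcases hfair.1 n with h | h
    · rw [hsf] at h; exact absurd h (by simp)
    · rw [hst] at h; exact absurd h (by simp)
  · -- s only : (A, B)
    refine L_AB hstep hfair (n+1) (fun k hk => hsmall k (by omega)) ?_ ?_
    · exact (col_inact hstep n false hsf).trans h1
    · rw [col_act hstep n true hst]; simp [h1, nxt]
  · -- r only : (B, A)
    refine L_BA hstep hfair (n+1) (fun k hk => hsmall k (by omega)) ?_ ?_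
    · rw [col_act hstep n false hsf]; simp [h2, nxt]
    · exact (col_inact hstep n true hst).trans h2
  · -- both : both reach the midpoint
    refine ⟨n+1, ?_⟩
    have hmf := half_move hstep n false hsf (by simpa using h2) (hsmall n le_rfl)
    have hmt := half_move hstep n true hst (by simpa using h1) (hsmall n le_rfl)
    simp only [Bool.not_false, Bool.not_true] at hmf hmt
    rw [hmf, hmt]
    module

lemma L_CC (hstep : ∀ n, StepFC δ (sched n) (exec n) (exec (n + 1)))
    (hfair : FairSched sched) (n : ℕ) (hsmall : ∀ m, n ≤ m → DD exec m < δ)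
    (h1 : (exec n).col false = ColABC.C) (h2 : (exec n).col true = ColABC.C) :
    Meets exec := by
  cases hsf : sched n false <;> cases hst : sched n true
  · rcases hfair.1 n with h | h
    · rw [hsf] at h; exact absurd h (by simp)
    · rw [hst] at h; exact absurd h (by simp)
  · -- s only : s moves onto r
    refine ⟨n+1, ?_⟩
    have hmv : (exec (n+1)).pos true = (exec n).pos false :=
      full_move hstep n true hst (by simpa using h1) (hsmall n le_rfl)
    rw [notmove hstep n false (Or.inl hsf), hmv]
  · -- r only : r moves onto s
    refine ⟨n+1, ?_⟩
    have hmv : (exec (n+1)).pos false = (exec n).pos true :=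
      full_move hstep n false hsf (by simpa using h2) (hsmall n le_rfl)
    rw [notmove hstep n true (Or.inl hst), hmv]
  · -- both : swap, colors (A,A)
    refine L_AA hstep hfair (n+1) (fun k hk => hsmall k (by omega)) ?_ ?_
    · rw [col_act hstep n false hsf]; simp [h2, nxt]
    · rw [col_act hstep n true hst]; simp [h1, nxt]

lemma L_BB (hstep : ∀ n, StepFC δ (sched n) (exec n) (exec (n + 1)))
    (hfair : FairSched sched) (n : ℕ) (hsmall : ∀ m, n ≤ m → DD exec m < δ)
    (h1 : (exec n).col false = ColABC.B) (h2 : (exec n).col true = ColABC.B) :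
    Meets exec := by
  have hsm : ∀ k, n+1 ≤ k → DD exec k < δ := fun k hk => hsmall k (by omega)
  cases hsf : sched n false <;> cases hst : sched n true
  · rcases hfair.1 n with h | h
    · rw [hsf] at h; exact absurd h (by simp)
    · rw [hst] at h; exact absurd h (by simp)
  · refine L_BC hstep hfair (n+1) hsm ?_ ?_
    · exact (col_inact hstep n false hsf).trans h1
    · rw [col_act hstep n true hst]; simp [h1, nxt]
  · refine L_CB hstep hfair (n+1) hsm ?_ ?_
    · rw [col_act hstep n false hsf]; simp [h2, nxt]
    · exact (col_inact hstep n true hst).trans h2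
  · refine L_CC hstep hfair (n+1) hsm ?_ ?_
    · rw [col_act hstep n false hsf]; simp [h2, nxt]
    · rw [col_act hstep n true hst]; simp [h1, nxt]

lemma phase2 (hstep : ∀ n, StepFC δ (sched n) (exec n) (exec (n + 1)))
    (hfair : FairSched sched) (n : ℕ) (hsmall : ∀ m, n ≤ m → DD exec m < δ) : Meets exec := by
  cases h1 : (exec n).col false <;> cases h2 : (exec n).col true
  · exact L_AA hstep hfair n hsmall h1 h2
  · exact L_AB hstep hfair n hsmall h1 h2
  · exact L_AC hstep hfair n hsmall h1 h2
  · exact L_BA hstep hfair n hsmall h1 h2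
  · exact L_BB hstep hfair n hsmall h1 h2
  · exact L_BC hstep hfair n hsmall h1 h2
  · exact L_CA hstep hfair n hsmall h1 h2
  · exact L_CB hstep hfair n hsmall h1 h2
  · exact L_CC hstep hfair n hsmall h1 h2

end Exec
end RVaux

/-- In SSynch with non-rigid movements, two finite-communication robots
running the 3-color algorithm solve Rendezvous from every pair of initial
positions, every pair of initial light colors, every `δ > 0`, every fair
schedule and every adversarial choice of stopping points: Rendezvous of two
`FComm` robots in SSynch is solvable by an algorithm of class 𝓛 with only
three colors, even starting from an arbitrary color configuration, without
unit distance agreement, and with non-rigid movements. -/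
theorem rendezvous_fcomm_ssynch_3colors (δ : ℝ) (hδ : 0 < δ)
    (exec : ℕ → ConfigFC) (sched : ℕ → Bool → Bool) (hfair : FairSched sched)
    (hstep : ∀ n, StepFC δ (sched n) (exec n) (exec (n + 1))) :
    SolvesFC exec := by
  have hmeet : ∃ m, (exec m).pos false = (exec m).pos true := by
    by_contra h
    push_neg at h
    by_cases Hd : ∀ m, δ ≤ RVaux.DD exec m
    · exact RVaux.no_far hstep hfair hδ h Hd
    · push_neg at Hd
      obtain ⟨n, hn⟩ := Hd
      have hsmall : ∀ m, n ≤ m → RVaux.DD exec m < δ :=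
        fun m hm => lt_of_le_of_lt (RVaux.D_mono_le hstep hm) hn
      obtain ⟨m, hm⟩ := RVaux.phase2 hstep hfair n hsmall
      exact h m hm
  obtain ⟨m, hm⟩ := hmeet
  refine ⟨m, fun k hk i => ?_⟩
  have h2 := RVaux.meet_forever hstep m hm k hk
  cases i
  · exact h2.1
  · exact h2.2
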